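/- Let Ψ(a,t) = d(a) + ((a²+L²)/4)(2t+1) + (|v₀^min|/2)ln(1+1/t) − La√(t(t+1)) for t > 0, with 0 < 2a < L. Then t ↦ Ψ(a,t) attains its minimum at the unique point t_a = −1/2 + √(1/4 + s₊), where s₊ is the unique positive root of (L²−a²)²s² − (2(L²+a²)|v₀^min| + L²a²)s + |v₀^min|² = 0 satisfying (L²+a²)s − |v₀^min| > 0. -/

import Mathlib

open Real Set

set_option maxHeartbeats 2000000

/-- `t ↦ Ψ(a,t)` attains its minimum on `(0,∞)` exactly at
`t_a = -1/2 + √(1/4 + s₊)`, where `s₊` is the unique positive root of the quadratic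
`(L²-a²)²s² - (2(L²+a²)|v| + L²a²)s + |v|² = 0` with `(L²+a²)s - |v| > 0`. -/
theorem stmt17 (a L vmin da : ℝ) (ha : 0 < a) (hL : 2 * a < L)
    (hvmin : vmin < 0) (hda : 0 ≤ da)
    (Ψa : ℝ → ℝ)
    (hΨa : ∀ t, Ψa t = da + (a ^ 2 + L ^ 2) / 4 * (2 * t + 1) +
      |vmin| / 2 * Real.log (1 + 1 / t) - L * a * Real.sqrt (t * (t + 1)))
    (sp : ℝ) (hsp : 0 < sp)
    (hroot : (L ^ 2 - a ^ 2) ^ 2 * sp ^ 2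
      - (2 * (L ^ 2 + a ^ 2) * |vmin| + L ^ 2 * a ^ 2) * sp + |vmin| ^ 2 = 0)
    (hpos : 0 < (L ^ 2 + a ^ 2) * sp - |vmin|) :
    IsMinOn Ψa (Set.Ioi 0) (-(1/2) + Real.sqrt (1/4 + sp)) ∧
    ∀ t ∈ Set.Ioi (0:ℝ), IsMinOn Ψa (Set.Ioi 0) t →
      t = -(1/2) + Real.sqrt (1/4 + sp) := by
  have hL0 : 0 < L := by linarith
  have hc : (0:ℝ) < |vmin| := abs_pos.mpr (ne_of_lt hvmin)
  set c : ℝ := |vmin| with hcdef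
  set A : ℝ := L ^ 2 + a ^ 2 with hAdef
  have hApos : 0 < A := by positivity
  have hE : 0 < L ^ 2 - a ^ 2 := by nlinarith
  have hE2 : 0 < (L ^ 2 - a ^ 2) ^ 2 := by positivity
  set E2 : ℝ := (L ^ 2 - a ^ 2) ^ 2 with hE2def
  set t₀ : ℝ := -(1/2) + Real.sqrt (1/4 + sp) with ht₀def
  have hsq : Real.sqrt (1/4 + sp) ^ 2 = 1/4 + sp := Real.sq_sqrt (by linarith)
  have hsqgt : 1/2 < Real.sqrt (1/4 + sp) := by
    nlinarith [Real.sqrt_nonneg (1/4 + sp)]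
  have ht₀pos : 0 < t₀ := by rw [ht₀def]; linarith
  have ht₀sp : t₀ ^ 2 + t₀ = sp := by rw [ht₀def]; nlinarith
  -- the other root of the quadratic
  set r : ℝ := c ^ 2 / (E2 * sp) with hrdef
  have hr' : E2 * sp * r - c ^ 2 = 0 := by
    rw [hrdef]; field_simp; ring
  -- factorization of the quadratic (multiplied by sp)
  have hkey : ∀ s : ℝ, sp * (E2 * s ^ 2 - (2 * A * c + L ^ 2 * a ^ 2) * s + c ^ 2)
      = sp * E2 * (s - sp) * (s - r) := by
    intro s
    linear_combination s * hroot + (s - sp) * hr'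
  -- r < c / A
  have hcA : c / A < sp := by
    rw [div_lt_iff₀ hApos]; nlinarith
  have hqu : E2 * (c/A) ^ 2 - (2 * A * c + L ^ 2 * a ^ 2) * (c/A) + c ^ 2
      = -(L ^ 2 * a ^ 2 * (c/A) * (4 * (c/A) + 1)) := by
    rw [hE2def, hAdef]; field_simp; ring
  have hrcA : r < c / A := by
    have h1 : sp * (E2 * (c/A) ^ 2 - (2 * A * c + L ^ 2 * a ^ 2) * (c/A) + c ^ 2)
        = sp * E2 * (c/A - sp) * (c/A - r) := hkey (c/A)
    rw [hqu] at h1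
    have h2 : 0 < L ^ 2 * a ^ 2 * (c/A) * (4 * (c/A) + 1) := by positivity
    have h3 : sp * E2 * (c/A - sp) * (c/A - r) < 0 := by
      rw [← h1]
      exact mul_neg_of_pos_of_neg hsp (by linarith)
    by_contra hcon
    push_neg at hcon
    have h4 : 0 ≤ sp * E2 * ((sp - c/A) * (r - c/A)) :=
      mul_nonneg (mul_pos hsp hE2).le (mul_nonneg (by linarith) (by linarith))
    have h5 : sp * E2 * (c/A - sp) * (c/A - r) = sp * E2 * ((sp - c/A) * (r - c/A)) := by
      ring
    linarith
  -- sign of G s := A*s - c - L*a*√(s*(4s+1))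
  have hGpos : ∀ s : ℝ, sp < s → 0 < A * s - c - L * a * Real.sqrt (s * (4 * s + 1)) := by
    intro s hs
    have hs0 : 0 < s := lt_trans hsp hs
    have h1 : 0 < A * s - c := by nlinarith
    have hq : 0 < E2 * s ^ 2 - (2 * A * c + L ^ 2 * a ^ 2) * s + c ^ 2 := by
      have hk := hkey s
      have hfac : 0 < sp * E2 * (s - sp) * (s - r) :=
        mul_pos (mul_pos (mul_pos hsp hE2) (by linarith)) (by linarith)
      nlinarith [hk, hfac]
    have hrw : Real.sqrt ((L * a) ^ 2 * (s * (4 * s + 1)))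
        = L * a * Real.sqrt (s * (4 * s + 1)) := by
      rw [Real.sqrt_mul (by positivity : (0:ℝ) ≤ (L * a) ^ 2),
        Real.sqrt_sq (by positivity : (0:ℝ) ≤ L * a)]
    have hident : (A * s - c) ^ 2 - (L * a) ^ 2 * (s * (4 * s + 1))
        = E2 * s ^ 2 - (2 * A * c + L ^ 2 * a ^ 2) * s + c ^ 2 := by
      rw [hAdef, hE2def]; ring
    have hlt : Real.sqrt ((L * a) ^ 2 * (s * (4 * s + 1))) < A * s - c := by
      rw [Real.sqrt_lt' h1]
      nlinarith [hq, hident]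
    rw [hrw] at hlt
    linarith
  have hGneg : ∀ s : ℝ, 0 < s → s < sp → A * s - c - L * a * Real.sqrt (s * (4 * s + 1)) < 0 := by
    intro s hs0 hs
    have hsqrtpos : 0 < Real.sqrt (s * (4 * s + 1)) := Real.sqrt_pos.mpr (by nlinarith)
    rcases le_or_gt (A * s - c) 0 with h | h
    · nlinarith [mul_pos (mul_pos hL0 ha) hsqrtpos]
    · have hscA : c / A < s := by rw [div_lt_iff₀ hApos]; nlinarith
      have hq : E2 * s ^ 2 - (2 * A * c + L ^ 2 * a ^ 2) * s + c ^ 2 < 0 := by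
        have hk := hkey s
        have hfac : sp * E2 * (s - sp) * (s - r) < 0 :=
          mul_neg_of_neg_of_pos
            (mul_neg_of_pos_of_neg (mul_pos hsp hE2) (by linarith)) (by linarith)
        nlinarith [hk, hfac]
      have hrw : Real.sqrt ((L * a) ^ 2 * (s * (4 * s + 1)))
          = L * a * Real.sqrt (s * (4 * s + 1)) := by
        rw [Real.sqrt_mul (by positivity : (0:ℝ) ≤ (L * a) ^ 2),
          Real.sqrt_sq (by positivity : (0:ℝ) ≤ L * a)]
      have hident : (A * s - c) ^ 2 - (L * a) ^ 2 * (s * (4 * s + 1))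
          = E2 * s ^ 2 - (2 * A * c + L ^ 2 * a ^ 2) * s + c ^ 2 := by
        rw [hAdef, hE2def]; ring
      have hlt : A * s - c < Real.sqrt ((L * a) ^ 2 * (s * (4 * s + 1))) := by
        rw [Real.lt_sqrt (le_of_lt h)]
        nlinarith [hq, hident]
      rw [hrw] at hlt
      linarith
  -- the derivative of Ψa
  have hΨfun : Ψa = fun t => da + (a ^ 2 + L ^ 2) / 4 * (2 * t + 1) +
      c / 2 * Real.log (1 + 1 / t) - L * a * Real.sqrt (t * (t + 1)) := funext hΨa
  have hderiv : ∀ t : ℝ, 0 < t → HasDerivAt Ψa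
      ((a ^ 2 + L ^ 2) / 2 + c / 2 * (-(t ^ 2)⁻¹ / (1 + 1 / t))
        - L * a * ((2 * t + 1) / (2 * Real.sqrt (t * (t + 1))))) t := by
    intro t ht
    rw [hΨfun]
    have htne : t ≠ 0 := ne_of_gt ht
    have h1t : (0:ℝ) < 1 + 1 / t := by positivity
    have hinv : HasDerivAt (fun x : ℝ => 1 + 1 / x) (-(t ^ 2)⁻¹) t := by
      simpa [one_div] using (hasDerivAt_inv htne).const_add (1:ℝ)
    have hlog : HasDerivAt (fun x : ℝ => Real.log (1 + 1 / x)) (-(t ^ 2)⁻¹ / (1 + 1 / t)) t :=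
      hinv.log (ne_of_gt h1t)
    have hpoly : HasDerivAt (fun x : ℝ => x * (x + 1)) (2 * t + 1) t := by
      have h := (hasDerivAt_id t).mul ((hasDerivAt_id t).add_const (1:ℝ))
      exact h.congr_deriv (by simp only [id_eq]; ring)
    have hsqrt : HasDerivAt (fun x : ℝ => Real.sqrt (x * (x + 1)))
        ((2 * t + 1) / (2 * Real.sqrt (t * (t + 1)))) t :=
      hpoly.sqrt (by positivity)
    have hlin : HasDerivAt (fun x : ℝ => da + (a ^ 2 + L ^ 2) / 4 * (2 * x + 1))
        ((a ^ 2 + L ^ 2) / 2) t := by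
      have h := ((((hasDerivAt_id t).const_mul (2:ℝ)).add_const (1:ℝ)).const_mul
        ((a ^ 2 + L ^ 2) / 4)).const_add da
      exact h.congr_deriv (by ring)
    have := (hlin.add (hlog.const_mul (c / 2))).sub (hsqrt.const_mul (L * a))
    exact this.congr_deriv (by ring)
  -- derivative sign
  have hDpos : ∀ t : ℝ, t₀ < t → 0 < (a ^ 2 + L ^ 2) / 2 + c / 2 * (-(t ^ 2)⁻¹ / (1 + 1 / t))
      - L * a * ((2 * t + 1) / (2 * Real.sqrt (t * (t + 1)))) := by
    intro t ht
    have ht0 : 0 < t := lt_trans ht₀pos ht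
    have htne : t ≠ 0 := ne_of_gt ht0
    have h1t : (0:ℝ) < 1 + 1 / t := by positivity
    have hspos : (0:ℝ) < t * (t + 1) := by nlinarith
    set S := Real.sqrt (t * (t + 1)) with hSdef
    have hS : 0 < S := Real.sqrt_pos.mpr hspos
    have hS2 : S ^ 2 = t * (t + 1) := Real.sq_sqrt (le_of_lt hspos)
    have hssp : sp < t * (t + 1) := by nlinarith
    have hG := hGpos (t * (t + 1)) hssp
    have hrw : Real.sqrt ((t * (t + 1)) * (4 * (t * (t + 1)) + 1)) = (2 * t + 1) * S := by
      rw [show (t * (t + 1)) * (4 * (t * (t + 1)) + 1) = ((2 * t + 1) * S) ^ 2 by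
          linear_combination (-(2 * t + 1) ^ 2) * hS2,
        Real.sqrt_sq (by positivity)]
    rw [hrw] at hG
    have hinv2 : -(t ^ 2)⁻¹ / (1 + 1 / t) = -(1 / (t * (t + 1))) := by
      field_simp
    have hident : (a ^ 2 + L ^ 2) / 2 + c / 2 * (-(t ^ 2)⁻¹ / (1 + 1 / t))
        - L * a * ((2 * t + 1) / (2 * S))
        = (A * (t * (t + 1)) - c - L * a * ((2 * t + 1) * S)) / (2 * (t * (t + 1))) := by
      rw [hAdef, hinv2, ← hS2]
      field_simp
      ring
    rw [hident]
    exact div_pos hG (by positivity)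
  have hDneg : ∀ t : ℝ, 0 < t → t < t₀ → (a ^ 2 + L ^ 2) / 2 + c / 2 * (-(t ^ 2)⁻¹ / (1 + 1 / t))
      - L * a * ((2 * t + 1) / (2 * Real.sqrt (t * (t + 1)))) < 0 := by
    intro t ht0 ht
    have htne : t ≠ 0 := ne_of_gt ht0
    have h1t : (0:ℝ) < 1 + 1 / t := by positivity
    have hspos : (0:ℝ) < t * (t + 1) := by nlinarith
    set S := Real.sqrt (t * (t + 1)) with hSdef
    have hS : 0 < S := Real.sqrt_pos.mpr hspos
    have hS2 : S ^ 2 = t * (t + 1) := Real.sq_sqrt (le_of_lt hspos)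
    have hssp : t * (t + 1) < sp := by nlinarith
    have hG := hGneg (t * (t + 1)) hspos hssp
    have hrw : Real.sqrt ((t * (t + 1)) * (4 * (t * (t + 1)) + 1)) = (2 * t + 1) * S := by
      rw [show (t * (t + 1)) * (4 * (t * (t + 1)) + 1) = ((2 * t + 1) * S) ^ 2 by
          linear_combination (-(2 * t + 1) ^ 2) * hS2,
        Real.sqrt_sq (by positivity)]
    rw [hrw] at hG
    have hinv2 : -(t ^ 2)⁻¹ / (1 + 1 / t) = -(1 / (t * (t + 1))) := by
      field_simp
    have hident : (a ^ 2 + L ^ 2) / 2 + c / 2 * (-(t ^ 2)⁻¹ / (1 + 1 / t))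
        - L * a * ((2 * t + 1) / (2 * S))
        = (A * (t * (t + 1)) - c - L * a * ((2 * t + 1) * S)) / (2 * (t * (t + 1))) := by
      rw [hAdef, hinv2, ← hS2]
      field_simp
      ring
    rw [hident]
    exact div_neg_of_neg_of_pos hG (by positivity)
  -- continuity on (0, ∞)
  have hcont : ContinuousOn Ψa (Set.Ioi 0) := by
    intro x hx
    exact ((hderiv x hx).continuousAt).continuousWithinAt
  -- strict monotonicity
  have hanti : StrictAntiOn Ψa (Set.Ioc 0 t₀) := by
    apply strictAntiOn_of_deriv_neg (convex_Ioc 0 t₀)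
      (hcont.mono (Set.Ioc_subset_Ioi_self))
    intro x hx
    rw [interior_Ioc] at hx
    rw [(hderiv x hx.1).deriv]
    exact hDneg x hx.1 hx.2
  have hmono : StrictMonoOn Ψa (Set.Ici t₀) := by
    apply strictMonoOn_of_deriv_pos (convex_Ici t₀)
      (hcont.mono (fun x hx => lt_of_lt_of_le ht₀pos hx))
    intro x hx
    rw [interior_Ici] at hx
    rw [(hderiv x (lt_trans ht₀pos hx)).deriv]
    exact hDpos x hx
  have hmin : ∀ t ∈ Set.Ioi (0:ℝ), t ≠ t₀ → Ψa t₀ < Ψa t := by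
    intro t ht hne
    rcases lt_or_gt_of_ne hne with h | h
    · exact hanti (Set.mem_Ioc.mpr ⟨ht, le_of_lt h⟩) (Set.mem_Ioc.mpr ⟨ht₀pos, le_refl _⟩) h
    · exact hmono (Set.mem_Ici.mpr (le_refl _)) (Set.mem_Ici.mpr (le_of_lt h)) h
  constructor
  · rw [isMinOn_iff]
    intro t ht
    rcases eq_or_ne t t₀ with rfl | hne
    · exact le_refl _
    · exact le_of_lt (hmin t ht hne)
  · intro t ht hisMin
    by_contra hne
    have h1 : Ψa t ≤ Ψa t₀ := isMinOn_iff.mp hisMin t₀ (Set.mem_Ioi.mpr ht₀pos)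
    have h2 : Ψa t₀ < Ψa t := hmin t ht hne
    linarith
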